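/- arXiv:1008.3719 — 7 statements merged into one kernel-verified Lean document; each statement's English description precedes it below -/
import Mathlib

section
/- Let D be a finite-dimensional ℚ-division algebra whose centre is the number field K, and let R be a maximal order in D. Then the centre of R is the ring of integers of K; that is, an element x of D lies in the centre of R if and only if x lies in the centre of D and x is integral over ℤ. -/
/-- An order in a finite-dimensional `ℚ`-algebra `D`: a subring whose additive group is
finitely generated and which spans `D` over `ℚ`. -/
def IsOrder {D : Type*} [Ring D] [Algebra ℚ D] (R : Subring D) : Prop :=
  R.toAddSubgroup.FG ∧ Submodule.span ℚ (R : Set D) = ⊤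

/-- Let `D` be a finite-dimensional `ℚ`-division algebra and let `R` be a
maximal order in `D`. Then the centre of `R` is the ring of integers of the centre `K` of `D`:
an element `x ∈ D` lies in the centre of `R` iff it lies in the centre of `D` and is
integral over `ℤ`. -/
theorem stmt_1 {D : Type*} [DivisionRing D] [Algebra ℚ D] [FiniteDimensional ℚ D]
    (R : Subring D) (hR : IsOrder R)
    (hmax : ∀ S : Subring D, IsOrder S → R ≤ S → S = R) (x : D) :
    (x ∈ R ∧ ∀ y ∈ R, x * y = y * x) ↔
      x ∈ Subring.center D ∧ IsIntegral ℤ x := by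
  constructor
  · rintro ⟨hxR, hcomm⟩
    constructor
    · -- x commutes with all of D since R spans D over ℚ
      rw [Subring.mem_center_iff]
      intro g
      have hg : g ∈ Submodule.span ℚ (R : Set D) := hR.2 ▸ Submodule.mem_top
      induction hg using Submodule.span_induction with
      | mem y hy => exact (hcomm y hy).symm
      | zero => simp
      | add a b _ _ ha hb => rw [add_mul, mul_add, ha, hb]
      | smul q a _ ha => rw [smul_mul_assoc, mul_smul_comm, ha]
    · -- integrality from FG of R as ℤ-module
      refine IsIntegral.of_mem_of_fg (subalgebraOfSubring R) ?_ x hxR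
      exact (Submodule.fg_iff_addSubgroup_fg _).mpr hR.1
  · rintro ⟨hxc, hxint⟩
    rw [Subring.mem_center_iff] at hxc
    -- the ℤ-submodule generated by R
    set M : Submodule ℤ D := AddSubgroup.toIntSubmodule R.toAddSubgroup with hM
    have hMmem : ∀ {r : D}, r ∈ M ↔ r ∈ R := Iff.rfl
    -- the ℤ-subalgebra generated by x
    set A : Subalgebra ℤ D := Algebra.adjoin ℤ ({x} : Set D) with hA
    have hAc : ∀ a ∈ A, ∀ d : D, d * a = a * d := by
      intro a ha
      have : A ≤ Subalgebra.center ℤ D := by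
        apply Algebra.adjoin_le
        intro y hy
        rw [Set.mem_singleton_iff] at hy
        subst hy
        exact Subalgebra.mem_center_iff.mpr hxc
      intro d
      exact (Subalgebra.mem_center_iff.mp (this ha) d)
    set N : Submodule ℤ D := M * Subalgebra.toSubmodule A with hN
    have hNfg : N.FG := Submodule.FG.mul ((Submodule.fg_iff_addSubgroup_fg _).mpr hR.1)
      hxint.fg_adjoin_singleton
    -- N is closed under multiplication
    have hmul : ∀ p ∈ N, ∀ q ∈ N, p * q ∈ N := by
      intro p hp
      refine Submodule.mul_induction_on hp ?_ ?_
      · intro m hm a ha q hq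
        refine Submodule.mul_induction_on hq ?_ ?_
        · intro m' hm' a' ha'
          have : m * a * (m' * a') = (m * m') * (a * a') := by
            rw [mul_assoc m a (m' * a'), ← mul_assoc a m' a', ← hAc a ha m',
              mul_assoc m' a a', ← mul_assoc m m' (a * a')]
          rw [this]
          exact Submodule.mul_mem_mul (hMmem.mpr (R.mul_mem (hMmem.mp hm) (hMmem.mp hm')))
            (A.mul_mem ha ha')
        · intro q1 q2 ih1 ih2
          rw [mul_add]; exact N.add_mem ih1 ih2
      · intro p1 p2 ih1 ih2 q hq
        rw [add_mul]; exact N.add_mem (ih1 q hq) (ih2 q hq)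
    -- N as a subring
    let S : Subring D :=
      { carrier := N
        zero_mem' := N.zero_mem
        add_mem' := fun ha hb => N.add_mem ha hb
        neg_mem' := fun ha => N.neg_mem ha
        one_mem' := by
          have : (1 : D) * 1 ∈ N := Submodule.mul_mem_mul (hMmem.mpr R.one_mem) A.one_mem
          simpa using this
        mul_mem' := fun ha hb => hmul _ ha _ hb }
    have hRS : R ≤ S := by
      intro r hr
      have : r * 1 ∈ N := Submodule.mul_mem_mul (hMmem.mpr hr) A.one_mem
      have h2 : r ∈ N := by simpa using this
      exact h2
    have hSord : IsOrder S := by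
      constructor
      · exact (Submodule.fg_iff_addSubgroup_fg N).mp hNfg
      · rw [eq_top_iff, ← hR.2]
        exact Submodule.span_mono hRS
    have hxS : x ∈ S := by
      have : (1 : D) * x ∈ N :=
        Submodule.mul_mem_mul (hMmem.mpr R.one_mem) (Algebra.subset_adjoin rfl)
      have h2 : x ∈ N := by simpa using this
      exact h2
    have := hmax S hSord hRS
    rw [this] at hxS
    exact ⟨hxS, fun y _ => (hxc y).symm⟩
end

section
/- Let D be a finite-dimensional ℚ-division algebra and let R be an order in D. Then every finitely generated torsion-free left R-module admits an injective R-linear map into a finitely generated free left R-module R^r for some r ≥ 0. -/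
set_option linter.unusedSectionVars false

open TensorProduct

namespace Stmt2Aux

noncomputable section

variable {D : Type*} [DivisionRing D] [Algebra ℚ D] {R : Subring D}
variable {M : Type*} [AddCommGroup M] [Module R M]

/-- Scalar action of `r : R` on `M` as a `ℤ`-linear endomorphism. -/
def rsmul (r : R) : M →ₗ[ℤ] M where
  toFun m := r • m
  map_add' a b := smul_add r a b
  map_smul' z m := by
    simpa using (DistribSMul.toAddMonoidHom M r).map_zsmul z m

@[simp] lemma rsmul_apply (r : R) (m : M) : rsmul r m = r • m := rfl

/-- The induced `ℚ`-linear endomorphism of `ℚ ⊗[ℤ] M`. -/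
def rho (r : R) : Module.End ℚ (ℚ ⊗[ℤ] M) := LinearMap.baseChange ℚ (rsmul r)

@[simp] lemma rho_tmul (r : R) (q : ℚ) (m : M) :
    rho r (q ⊗ₜ[ℤ] m) = q ⊗ₜ[ℤ] (r • m) := by
  simp [rho]

lemma rho_add (r s : R) : rho (M := M) (r + s) = rho r + rho s := by
  have : rsmul (M := M) (r + s) = rsmul r + rsmul s := by
    ext m; simp [add_smul]
  simp [rho, this, LinearMap.baseChange_add]

lemma rho_mul (r s : R) : rho (M := M) (r * s) = rho r * rho s := by
  have : rsmul (M := M) (r * s) = rsmul r ∘ₗ rsmul s := by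
    ext m; simp [mul_smul]
  rw [rho, this, LinearMap.baseChange_comp]
  rfl

lemma rho_one : rho (R := R) (M := M) 1 = 1 := by
  have : rsmul (R := R) (M := M) 1 = LinearMap.id := by ext m; simp
  rw [rho, this, LinearMap.baseChange_id]
  rfl

/-- `rho` as additive monoid hom. -/
def rhoAddHom : R →+ Module.End ℚ (ℚ ⊗[ℤ] M) := AddMonoidHom.mk' rho rho_add

lemma rho_zsmul (z : ℤ) (r : R) : rho (M := M) (z • r) = z • rho r :=
  map_zsmul (rhoAddHom (R := R) (M := M)) z r


lemma exists_zsmul_mem (hspan : Submodule.span ℚ (R : Set D) = ⊤) (d : D) :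
    ∃ z : ℤ, z ≠ 0 ∧ z • d ∈ R := by
  have hd : d ∈ Submodule.span ℚ (R : Set D) := hspan ▸ Submodule.mem_top
  induction hd using Submodule.span_induction with
  | mem x hx => exact ⟨1, one_ne_zero, by simpa using hx⟩
  | zero => exact ⟨1, one_ne_zero, by simpa using R.zero_mem⟩
  | add x y _ _ hx hy =>
    obtain ⟨z₁, hz₁, hx⟩ := hx
    obtain ⟨z₂, hz₂, hy⟩ := hy
    refine ⟨z₁ * z₂, mul_ne_zero hz₁ hz₂, ?_⟩
    have : (z₁ * z₂) • (x + y) = z₂ • (z₁ • x) + z₁ • (z₂ • y) := by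
      rw [smul_add, ← mul_smul, ← mul_smul, mul_comm z₂ z₁]
    rw [this]
    exact add_mem (zsmul_mem hx z₂) (zsmul_mem hy z₁)
  | smul q x _ ih =>
    obtain ⟨z, hz, hzx⟩ := ih
    refine ⟨(q.den : ℤ) * z, mul_ne_zero (by exact_mod_cast q.den_ne_zero) hz, ?_⟩
    have key : ((q.den : ℤ) * z) • (q • x) = q.num • (z • x) := by
      rw [← Int.cast_smul_eq_zsmul ℚ ((q.den : ℤ) * z), ← Int.cast_smul_eq_zsmul ℚ q.num,
        ← Int.cast_smul_eq_zsmul ℚ z, smul_smul, smul_smul]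
      congr 1
      push_cast
      rw [mul_right_comm, mul_comm ((q.den : ℚ)), Rat.mul_den_eq_num]
    rw [key]
    exact zsmul_mem hzx q.num

lemma intCast_smul_end (z : ℤ) (E : Module.End ℚ (ℚ ⊗[ℤ] M)) : (z : ℚ) • E = z • E :=
  Int.cast_smul_eq_zsmul (R := ℚ) (M := Module.End ℚ (ℚ ⊗[ℤ] M)) z E

variable (h : ∀ d : D, ∃ z : ℤ, z ≠ 0 ∧ z • d ∈ R)
include h

/-- Extension of `rho` to all of `D`, by clearing denominators. -/
def psi (d : D) : Module.End ℚ (ℚ ⊗[ℤ] M) :=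
  (((Classical.choose (h d) : ℤ) : ℚ))⁻¹ •
    rho (⟨Classical.choose (h d) • d, (Classical.choose_spec (h d)).2⟩ : R)

lemma psi_eq {d : D} {z : ℤ} (hz : z ≠ 0) (r : R) (hr : (r : D) = z • d) :
    psi (M := M) h d = (z : ℚ)⁻¹ • rho r := by
  set z₀ := Classical.choose (h d) with hz₀def
  have hz₀ : z₀ ≠ 0 := (Classical.choose_spec (h d)).1
  set r₀ : R := ⟨z₀ • d, (Classical.choose_spec (h d)).2⟩ with hr₀def
  have key : z • r₀ = z₀ • r := by
    ext
    rw [AddSubgroupClass.coe_zsmul, AddSubgroupClass.coe_zsmul, hr]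
    show z • (z₀ • d) = z₀ • (z • d)
    exact smul_comm z z₀ d
  have key2 : (z : ℚ) • rho (M := M) r₀ = (z₀ : ℚ) • rho r := by
    rw [intCast_smul_end, intCast_smul_end, ← rho_zsmul, ← rho_zsmul, key]
  have hzq : (z : ℚ) ≠ 0 := Int.cast_ne_zero.mpr hz
  have hz₀q : (z₀ : ℚ) ≠ 0 := Int.cast_ne_zero.mpr hz₀
  show (z₀ : ℚ)⁻¹ • rho r₀ = (z : ℚ)⁻¹ • rho r
  apply smul_right_injective (Module.End ℚ (ℚ ⊗[ℤ] M)) (mul_ne_zero hzq hz₀q)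
  show ((z : ℚ) * (z₀ : ℚ)) • ((z₀ : ℚ)⁻¹ • rho r₀) =
    ((z : ℚ) * (z₀ : ℚ)) • ((z : ℚ)⁻¹ • rho r)
  rw [smul_smul, smul_smul]
  rw [show (z : ℚ) * (z₀ : ℚ) * (z₀ : ℚ)⁻¹ = (z : ℚ) by field_simp,
    show (z : ℚ) * (z₀ : ℚ) * (z : ℚ)⁻¹ = (z₀ : ℚ) by field_simp; try ring]
  exact key2

lemma psi_coe (r : R) : psi (M := M) h (r : D) = rho r := by
  rw [psi_eq h one_ne_zero r (by simp)]
  simp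

lemma psi_repr (d : D) : ∃ (z : ℤ) (r : R), z ≠ 0 ∧ (r : D) = z • d := by
  obtain ⟨z, hz, hmem⟩ := h d
  exact ⟨z, ⟨z • d, hmem⟩, hz, rfl⟩

lemma psi_add (d₁ d₂ : D) :
    psi (M := M) h (d₁ + d₂) = psi (M := M) h d₁ + psi (M := M) h d₂ := by
  obtain ⟨z₁, r₁, hz₁, hr₁⟩ := psi_repr h d₁
  obtain ⟨z₂, r₂, hz₂, hr₂⟩ := psi_repr h d₂
  have hsum : ((z₂ • r₁ + z₁ • r₂ : R) : D) = (z₁ * z₂) • (d₁ + d₂) := by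
    push_cast [hr₁, hr₂]
    rw [smul_add, ← mul_smul, ← mul_smul, mul_comm z₂ z₁]
  rw [psi_eq h hz₁ r₁ hr₁, psi_eq h hz₂ r₂ hr₂,
    psi_eq h (mul_ne_zero hz₁ hz₂) _ hsum]
  rw [rho_add, rho_zsmul, rho_zsmul, ← intCast_smul_end z₂,
    ← intCast_smul_end z₁, smul_add, smul_smul, smul_smul]
  have hq₁ : (z₁ : ℚ) ≠ 0 := Int.cast_ne_zero.mpr hz₁
  have hq₂ : (z₂ : ℚ) ≠ 0 := Int.cast_ne_zero.mpr hz₂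
  rw [show ((z₁ * z₂ : ℤ) : ℚ)⁻¹ * z₂ = (z₁ : ℚ)⁻¹ by push_cast; field_simp; try ring,
    show ((z₁ * z₂ : ℤ) : ℚ)⁻¹ * z₁ = (z₂ : ℚ)⁻¹ by push_cast; field_simp; try ring]

lemma psi_mul (d₁ d₂ : D) :
    psi (M := M) h (d₁ * d₂) = psi (M := M) h d₁ * psi (M := M) h d₂ := by
  obtain ⟨z₁, r₁, hz₁, hr₁⟩ := psi_repr h d₁
  obtain ⟨z₂, r₂, hz₂, hr₂⟩ := psi_repr h d₂
  have hmul : ((r₁ * r₂ : R) : D) = (z₁ * z₂) • (d₁ * d₂) := by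
    push_cast [hr₁, hr₂]
    rw [smul_mul_smul_comm]
  rw [psi_eq h hz₁ r₁ hr₁, psi_eq h hz₂ r₂ hr₂,
    psi_eq h (mul_ne_zero hz₁ hz₂) _ hmul, rho_mul, smul_mul_smul_comm]
  push_cast
  rw [mul_inv]

lemma psi_one : psi (M := M) (R := R) h 1 = 1 := by
  rw [psi_eq h one_ne_zero 1 (by simp)]
  simp [rho_one]

lemma psi_zero : psi (M := M) (R := R) h 0 = 0 := by
  rw [psi_eq h one_ne_zero 0 (by simp)]
  have : rho (R := R) (M := M) 0 = 0 := map_zero (rhoAddHom (R := R) (M := M))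
  simp [this]

lemma psi_qsmul (q : ℚ) (d : D) :
    psi (M := M) h (q • d) = q • psi (M := M) h d := by
  obtain ⟨z, r, hz, hr⟩ := psi_repr h d
  by_cases hq : q = 0
  · simp [hq, psi_zero]
  have hrep : ((q.num • r : R) : D) = ((q.den : ℤ) * z) • (q • d) := by
    push_cast [hr]
    rw [← Int.cast_smul_eq_zsmul ℚ ((q.den : ℤ) * z), ← Int.cast_smul_eq_zsmul ℚ q.num,
      ← Int.cast_smul_eq_zsmul ℚ z, smul_smul, smul_smul]
    congr 1
    push_cast
    rw [mul_right_comm ((q.den : ℚ)) ((z : ℚ)) q, mul_comm ((q.den : ℚ)) q,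
      Rat.mul_den_eq_num]
  have hden : ((q.den : ℤ) * z) ≠ 0 := mul_ne_zero (by exact_mod_cast q.den_ne_zero) hz
  rw [psi_eq h hden _ hrep, psi_eq h hz r hr, rho_zsmul,
    ← intCast_smul_end q.num, smul_smul, smul_smul]
  congr 1
  have hdq : (q.den : ℚ) ≠ 0 := by exact_mod_cast q.den_ne_zero
  have hzq : (z : ℚ) ≠ 0 := Int.cast_ne_zero.mpr hz
  push_cast
  field_simp
  rw [mul_comm, Rat.mul_den_eq_num]

/-- `psi` as a ring homomorphism. -/
def psiHom : D →+* Module.End ℚ (ℚ ⊗[ℤ] M) where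
  toFun := psi (M := M) h
  map_one' := psi_one h
  map_mul' := psi_mul h
  map_zero' := psi_zero h
  map_add' := psi_add h

end

end Stmt2Aux

/-- Let `D` be a finite-dimensional `ℚ`-division algebra and let `R` be an
order in `D`. Then every finitely generated torsion-free left `R`-module admits an injective
`R`-linear map into a finitely generated free left `R`-module `R^r` for some `r ≥ 0`. -/
theorem stmt_2 {D : Type*} [DivisionRing D] [Algebra ℚ D] [FiniteDimensional ℚ D]
    (R : Subring D) (hR : IsOrder R)
    (M : Type*) [AddCommGroup M] [Module R M] [Module.Finite R M]
    (htf : ∀ (α : R) (m : M), α ≠ 0 → m ≠ 0 → α • m ≠ 0) :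
    ∃ (r : ℕ) (f : M →ₗ[R] (Fin r → R)), Function.Injective f := by
  classical
  obtain ⟨hfg, hspan⟩ := hR
  haveI : CharZero D := charZero_of_injective_algebraMap (algebraMap ℚ D).injective
  -- M is ℤ-torsion-free
  haveI : NoZeroSMulDivisors ℤ M := by
    refine ⟨fun {z} {m} hzm => ?_⟩
    by_contra hcon
    push_neg at hcon
    obtain ⟨hz, hm⟩ := hcon
    have hα : ((z : ℤ) : R) ≠ 0 := by
      intro h0
      have : ((z : ℤ) : D) = 0 := by
        rw [← map_intCast R.subtype z, h0, map_zero]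
      exact hz (by exact_mod_cast this)
    exact htf ((z : ℤ) : R) m hα hm (by rwa [Int.cast_smul_eq_zsmul] at *)
  -- M is a finitely generated ℤ-module
  haveI hfgR : AddGroup.FG R := (AddGroup.fg_iff_addSubgroup_fg R.toAddSubgroup).mpr hfg
  haveI : Module.Finite ℤ R := Module.Finite.iff_addGroup_fg.mpr hfgR
  haveI : Module.Finite ℤ M := Module.Finite.trans (R := ℤ) (↥R) M
  -- hence free, hence flat; the natural map to ℚ ⊗ M is injective
  let g0 : M →ₗ[ℤ] ℚ ⊗[ℤ] M := TensorProduct.mk ℤ ℚ M 1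
  have hg0 : Function.Injective g0 := by
    have hj : Function.Injective (Algebra.linearMap ℤ ℚ) := fun a b hab => by
      simpa using hab
    have hinj := Module.Flat.rTensor_preserves_injective_linearMap
      (M := M) (Algebra.linearMap ℤ ℚ) hj
    have heq : ∀ m : M, g0 m =
        (LinearMap.rTensor M (Algebra.linearMap ℤ ℚ)) ((TensorProduct.lid ℤ M).symm m) := by
      intro m
      simp [g0]
      rfl
    intro a b hab
    rw [heq, heq] at hab
    exact (TensorProduct.lid ℤ M).symm.injective (hinj hab)
  -- D-module structure on ℚ ⊗ M
  have hz := Stmt2Aux.exists_zsmul_mem (R := R) hspan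
  letI : Module D (ℚ ⊗[ℤ] M) := Module.compHom _ (Stmt2Aux.psiHom (M := M) hz)
  have hsmul_def : ∀ (d : D) (w : ℚ ⊗[ℤ] M), d • w = Stmt2Aux.psi (M := M) hz d w :=
    fun _ _ => rfl
  letI : IsScalarTower ℚ D (ℚ ⊗[ℤ] M) := by
    constructor
    intro q d w
    rw [hsmul_def, hsmul_def]
    rw [Stmt2Aux.psi_qsmul]
    rfl
  haveI : Module.Finite D (ℚ ⊗[ℤ] M) :=
    Module.Finite.of_restrictScalars_finite ℚ D (ℚ ⊗[ℤ] M)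
  haveI : Module.Free D (ℚ ⊗[ℤ] M) := Module.Free.of_divisionRing D (ℚ ⊗[ℤ] M)
  let n := Module.finrank D (ℚ ⊗[ℤ] M)
  let b : Module.Basis (Fin n) D (ℚ ⊗[ℤ] M) := Module.finBasis D (ℚ ⊗[ℤ] M)
  let c : (ℚ ⊗[ℤ] M) ≃ₗ[D] (Fin n → D) := b.equivFun
  -- generators
  obtain ⟨s, hs⟩ := Module.finite_def.mp ‹Module.Finite R M›
  -- a common denominator
  have hz' := hz
  choose ζ hζ0 hζmem using hz'
  let Z : ℤ := ∏ m ∈ s, ∏ j : Fin n, ζ (c (g0 m) j)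
  have hZ0 : Z ≠ 0 :=
    Finset.prod_ne_zero_iff.mpr fun m _ =>
      Finset.prod_ne_zero_iff.mpr fun j _ => hζ0 _
  have hZd : ∀ d : D, ζ d ∣ Z → Z • d ∈ R := by
    intro d hdvd
    obtain ⟨k, hk⟩ := hdvd
    rw [hk, mul_comm, mul_smul]
    exact zsmul_mem (hζmem d) k
  have hmem0 : ∀ m ∈ s, ∀ j, Z • (c (g0 m) j) ∈ R := by
    intro m hm j
    have h1 : ζ (c (g0 m) j) ∣ ∏ j : Fin n, ζ (c (g0 m) j) :=
      Finset.dvd_prod_of_mem _ (Finset.mem_univ j)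
    have h2 : (∏ j : Fin n, ζ (c (g0 m) j)) ∣ Z :=
      Finset.dvd_prod_of_mem (fun m => ∏ j : Fin n, ζ (c (g0 m) j)) hm
    exact hZd _ (h1.trans h2)
  -- the action of R on ℚ ⊗ M matches
  have hcomm : ∀ (r : R) (m : M), g0 (r • m) = (r : D) • (g0 m) := by
    intro r m
    rw [hsmul_def, Stmt2Aux.psi_coe]
    show (1 : ℚ) ⊗ₜ[ℤ] (r • m) = Stmt2Aux.rho r ((1 : ℚ) ⊗ₜ[ℤ] m)
    rw [Stmt2Aux.rho_tmul]
  have hcoord : ∀ (d : D) (w : ℚ ⊗[ℤ] M) (j : Fin n), c (d • w) j = d * (c w j) := by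
    intro d w j
    rw [map_smul]
    rfl
  -- all of M has R-integral scaled coordinates
  let N : Submodule R M :=
  { carrier := {m | ∀ j, Z • (c (g0 m) j) ∈ R}
    add_mem' := by
      intro a b ha hb j
      rw [map_add, map_add]
      rw [Pi.add_apply, smul_add]
      exact add_mem (ha j) (hb j)
    zero_mem' := by
      intro j
      simpa using R.zero_mem
    smul_mem' := by
      intro r m hm j
      rw [hcomm, hcoord, ← mul_smul_comm]
      exact R.mul_mem r.2 (hm j) }
  have hNtop : ∀ m : M, ∀ j, Z • (c (g0 m) j) ∈ R := by
    have hN : N = ⊤ := by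
      rw [eq_top_iff, ← hs]
      exact Submodule.span_le.mpr fun m hm => hmem0 m hm
    intro m
    have : m ∈ N := by rw [hN]; trivial
    exact this
  -- the injective map
  let f : M →ₗ[R] (Fin n → R) :=
    { toFun := fun m => fun j => (⟨Z • (c (g0 m) j), hNtop m j⟩ : R)
      map_add' := by
        intro a b
        funext j
        ext
        show Z • (c (g0 (a + b)) j) = Z • (c (g0 a) j) + Z • (c (g0 b) j)
        rw [map_add, map_add, Pi.add_apply, smul_add]
      map_smul' := by
        intro r m
        funext j
        ext
        show Z • (c (g0 (r • m)) j) = ((r : D)) * (Z • (c (g0 m) j))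
        rw [hcomm, hcoord, ← mul_smul_comm] }
  refine ⟨n, f, ?_⟩
  intro m₁ m₂ hf
  have hj : ∀ j, Z • (c (g0 m₁) j) = Z • (c (g0 m₂) j) := by
    intro j
    exact congrArg Subtype.val (congrFun hf j)
  have hc : c (g0 m₁) = c (g0 m₂) := by
    funext j
    have hzD : ((Z : ℤ) : D) ≠ 0 := Int.cast_ne_zero.mpr hZ0
    have h1 := hj j
    rw [← Int.cast_smul_eq_zsmul D, ← Int.cast_smul_eq_zsmul D, smul_eq_mul,
      smul_eq_mul] at h1
    exact mul_left_cancel₀ hzD h1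
  exact hg0 (c.injective hc)
end

section
/- Let ζ₇ ∈ ℂ be a primitive seventh root of unity, τ := ζ₇ + ζ₇⁻¹, and R := ℤ[2τ, 2τ²]. Then the ideal 𝔪 := (2, 2τ, 2τ²) of R is a maximal ideal, and the quotient ring R/𝔪 is a field with exactly two elements (isomorphic to 𝔽₂). -/
/-- Elements of the form `p + 2qτ + 2rτ²` with integers `p,q,r`. -/
def inT (τ z : ℂ) : Prop := ∃ p q r : ℤ, z = (p : ℂ) + 2*(q : ℂ)*τ + 2*(r : ℂ)*τ^2

/-- Elements of the form `2p + 2qτ + 2rτ²` with integers `p,q,r`. -/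
def inM (τ z : ℂ) : Prop := ∃ p q r : ℤ, z = 2*(p : ℂ) + 2*(q : ℂ)*τ + 2*(r : ℂ)*τ^2

lemma inT_mul {τ x y : ℂ} (hτ : τ^3 + τ^2 - 2*τ - 1 = 0)
    (hx : inT τ x) (hy : inT τ y) : inT τ (x*y) := by
  obtain ⟨p, q, r, rfl⟩ := hx
  obtain ⟨p', q', r', rfl⟩ := hy
  refine ⟨p*p' + 4*(q*r'+q'*r) - 4*(r*r'), p*q'+p'*q+4*(q*r'+q'*r)-2*(r*r'),
    p*r'+2*(q*q')+p'*r-2*(q*r'+q'*r)+6*(r*r'), ?_⟩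
  push_cast
  linear_combination ((4:ℂ)*(q*r'+q'*r) + 4*(r*r')*(τ-1)) * hτ

lemma inM_mul_inT {τ x y : ℂ} (hτ : τ^3 + τ^2 - 2*τ - 1 = 0)
    (hx : inM τ x) (hy : inT τ y) : inM τ (x*y) := by
  obtain ⟨p, q, r, rfl⟩ := hx
  obtain ⟨p', q', r', rfl⟩ := hy
  refine ⟨p*p' + 2*(q*r'+q'*r) - 2*(r*r'), 2*(p*q')+p'*q+4*(q*r'+q'*r)-2*(r*r'),
    2*(p*r')+2*(q*q')+p'*r-2*(q*r'+q'*r)+6*(r*r'), ?_⟩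
  push_cast
  linear_combination ((4:ℂ)*(q*r'+q'*r) + 4*(r*r')*(τ-1)) * hτ

lemma inM_add {τ x y : ℂ} (hx : inM τ x) (hy : inM τ y) : inM τ (x+y) := by
  obtain ⟨p, q, r, rfl⟩ := hx
  obtain ⟨p', q', r', rfl⟩ := hy
  exact ⟨p+p', q+q', r+r', by push_cast; ring⟩

lemma inM_sub {τ x y : ℂ} (hx : inM τ x) (hy : inM τ y) : inM τ (x-y) := by
  obtain ⟨p, q, r, rfl⟩ := hx
  obtain ⟨p', q', r', rfl⟩ := hy
  exact ⟨p-p', q-q', r-r', by push_cast; ring⟩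

set_option maxHeartbeats 1000000 in
/-- Let `ζ₇ ∈ ℂ` be a primitive seventh root of unity,
`τ := ζ₇ + ζ₇⁻¹` and `R := ℤ[2τ, 2τ²]`. Then the ideal `𝔪 := (2, 2τ, 2τ²)` of `R` is
maximal and `R/𝔪` is a field with exactly two elements (isomorphic to `𝔽₂`). -/
theorem stmt_8 (ζ : ℂ) (hζ : IsPrimitiveRoot ζ 7)
    (R : Subalgebra ℤ ℂ)
    (hR : R = Algebra.adjoin ℤ {2 * (ζ + ζ⁻¹), 2 * (ζ + ζ⁻¹) ^ 2})
    (a b : R) (ha : (a : ℂ) = 2 * (ζ + ζ⁻¹)) (hb : (b : ℂ) = 2 * (ζ + ζ⁻¹) ^ 2)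
    (𝔪 : Ideal R) (h𝔪 : 𝔪 = Ideal.span {2, a, b}) :
    𝔪.IsMaximal ∧ Nonempty ((R ⧸ 𝔪) ≃+* ZMod 2) := by
  classical
  have h7 : ζ ^ 7 = 1 := hζ.pow_eq_one
  have hne : ζ ≠ 1 := hζ.ne_one (by norm_num)
  have hinv : ζ⁻¹ = ζ ^ 6 := inv_eq_of_mul_eq_one_left (by rw [← pow_succ]; exact h7)
  have hsum : ζ^6 + ζ^5 + ζ^4 + ζ^3 + ζ^2 + ζ + 1 = 0 := by
    have h := sub_ne_zero.mpr hne
    have h2 : (ζ - 1) * (ζ^6 + ζ^5 + ζ^4 + ζ^3 + ζ^2 + ζ + 1) = 0 := by linear_combination h7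
    exact (mul_eq_zero.mp h2).resolve_left h
  set τ : ℂ := ζ + ζ⁻¹ with hτdef
  have hτ : τ^3 + τ^2 - 2*τ - 1 = 0 := by
    rw [hτdef, hinv]
    linear_combination (-1 - ζ + 3*ζ^2 - ζ^4 - 2*ζ^6 + 3*ζ^7 - ζ^11 + ζ^12) * hsum
  -- every element of R lies in ℤ + 2ℤτ + 2ℤτ²
  have hT0 : ∀ z ∈ Algebra.adjoin ℤ ({2 * τ, 2 * τ ^ 2} : Set ℂ), inT τ z := by
    intro z hz
    induction hz using Algebra.adjoin_induction with
    | mem w hw =>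
      rcases hw with hw | hw
      · exact ⟨0, 1, 0, by rw [hw]; push_cast; ring⟩
      · exact ⟨0, 0, 1, by rw [Set.mem_singleton_iff.mp hw]; push_cast; ring⟩
    | algebraMap n => exact ⟨n, 0, 0, by push_cast; simp⟩
    | add u v _ _ hu hv =>
      obtain ⟨p, q, r, rfl⟩ := hu; obtain ⟨p', q', r', rfl⟩ := hv
      exact ⟨p+p', q+q', r+r', by push_cast; ring⟩
    | mul u v _ _ hu hv => exact inT_mul hτ hu hv
  have hT : ∀ x : R, inT τ (x : ℂ) := fun x => hT0 _ (hR ▸ x.2)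
  -- 1 is not of the form 2p + 2qτ + 2rτ²
  have hone : ¬ inM τ 1 := by
    rintro ⟨p, q, r, h1⟩
    have hcyc : Polynomial.cyclotomic 7 ℚ = minpoly ℚ ζ :=
      Polynomial.cyclotomic_eq_minpoly_rat hζ (by norm_num)
    set Q : Polynomial ℚ := Polynomial.C ((2*r : ℤ) : ℚ) + Polynomial.C ((2*q : ℤ) : ℚ) * Polynomial.X
      + Polynomial.C ((2*p+4*r-1 : ℤ) : ℚ) * Polynomial.X^2
      + Polynomial.C ((2*q : ℤ) : ℚ) * Polynomial.X^3
      + Polynomial.C ((2*r : ℤ) : ℚ) * Polynomial.X^4 with hQdef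
    have haev : Polynomial.aeval ζ Q = 0 := by
      rw [hQdef]
      simp only [map_add, map_mul, Polynomial.aeval_C, Polynomial.aeval_X_pow, Polynomial.aeval_X,
        map_pow, eq_ratCast]
      rw [hτdef, hinv] at h1
      push_cast
      linear_combination (-ζ^2) * h1 - (2*(q:ℂ)*ζ + 4*(r:ℂ)*ζ^2 + 2*(r:ℂ) + 2*(r:ℂ)*ζ^7) * h7
    have hdvd : minpoly ℚ ζ ∣ Q := minpoly.dvd ℚ ζ haev
    have hQ0 : Q = 0 := by
      by_contra hne0
      have hd := Polynomial.natDegree_le_of_dvd hdvd hne0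
      rw [← hcyc, Polynomial.natDegree_cyclotomic, Nat.totient_prime (by norm_num)] at hd
      have hd4 : Q.natDegree ≤ 4 := by rw [hQdef]; compute_degree
      omega
    have hc : Q.coeff 2 = 0 := by rw [hQ0]; simp
    rw [hQdef] at hc
    simp only [Polynomial.coeff_add, Polynomial.coeff_C_mul, Polynomial.coeff_X_pow,
      Polynomial.coeff_C, Polynomial.coeff_X] at hc
    norm_num at hc
    have hc' : ((2*p+4*r-1 : ℤ) : ℚ) = 0 := by push_cast; linarith
    have hc'' : (2*p+4*r-1 : ℤ) = 0 := by exact_mod_cast hc'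
    omega
  have hnM : ∀ {z : ℂ}, inM τ (z - 1) → ¬ inM τ z := by
    intro z hz1 hz
    exact hone (by simpa using inM_sub hz hz1)
  -- dichotomy
  have hdich : ∀ x : R, inM τ (x : ℂ) ∨ inM τ ((x : ℂ) - 1) := by
    intro x
    obtain ⟨p, q, r, hx⟩ := hT x
    rcases Int.even_or_odd p with ⟨k, hk⟩ | ⟨k, hk⟩
    · exact Or.inl ⟨k, q, r, by rw [hx, hk]; push_cast; ring⟩
    · exact Or.inr ⟨k, q, r, by rw [hx, hk]; push_cast; ring⟩
  -- the homomorphism to 𝔽₂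
  obtain ⟨φ, hφ⟩ : ∃ φ : R →+* ZMod 2, ∀ x : R, φ x = 0 ↔ inM τ (x : ℂ) := by
    refine ⟨⟨⟨⟨fun x => if inM τ (x : ℂ) then 0 else 1, ?_⟩, ?_⟩, ?_, ?_⟩, ?_⟩
    · -- map_one
      show (if inM τ ((1:R) : ℂ) then (0 : ZMod 2) else 1) = 1
      rw [OneMemClass.coe_one, if_neg hone]
    · -- map_mul
      intro x y
      show (if inM τ ((x*y : R) : ℂ) then (0 : ZMod 2) else 1)
        = (if inM τ ((x : R) : ℂ) then (0 : ZMod 2) else 1) * (if inM τ ((y : R) : ℂ) then (0 : ZMod 2) else 1)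
      rw [MulMemClass.coe_mul]
      rcases hdich x with hx | hx
      · rw [if_pos hx, if_pos (inM_mul_inT hτ hx (hT y)), zero_mul]
      · rcases hdich y with hy | hy
        · rw [mul_comm ((x : R) : ℂ) ((y : R) : ℂ), if_pos (inM_mul_inT hτ hy (hT x)),
            if_neg (hnM hx), if_pos hy, mul_zero]
        · have hxy : inM τ (((x : R) : ℂ) * ((y : R) : ℂ) - 1) := by
            have h := inM_add (inM_mul_inT hτ hx (hT y)) hy
            convert h using 1; ring
          rw [if_neg (hnM hxy), if_neg (hnM hx), if_neg (hnM hy)]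
          decide
    · -- map_zero
      show (if inM τ ((0:R) : ℂ) then (0 : ZMod 2) else 1) = 0
      rw [ZeroMemClass.coe_zero, if_pos ⟨0, 0, 0, by norm_num⟩]
    · -- map_add
      intro x y
      show (if inM τ ((x+y : R) : ℂ) then (0 : ZMod 2) else 1)
        = (if inM τ ((x : R) : ℂ) then (0 : ZMod 2) else 1) + (if inM τ ((y : R) : ℂ) then (0 : ZMod 2) else 1)
      rw [AddMemClass.coe_add]
      rcases hdich x with hx | hx <;> rcases hdich y with hy | hy
      · rw [if_pos hx, if_pos hy, if_pos (inM_add hx hy), add_zero]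
      · have h : inM τ (((x : R) : ℂ) + ((y : R) : ℂ) - 1) := by
          have h' := inM_add hx hy
          convert h' using 1; ring
        rw [if_pos hx, if_neg (hnM hy), if_neg (hnM h), zero_add]
      · have h : inM τ (((x : R) : ℂ) + ((y : R) : ℂ) - 1) := by
          have h' := inM_add hx hy
          convert h' using 1; ring
        rw [if_neg (hnM hx), if_pos hy, if_neg (hnM h), add_zero]
      · have h : inM τ (((x : R) : ℂ) + ((y : R) : ℂ)) := by
          have h' := inM_add (inM_add hx hy) (⟨1, 0, 0, by norm_num⟩ : inM τ 2)
          convert h' using 1; ring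
        rw [if_neg (hnM hx), if_neg (hnM hy), if_pos h]
        decide
    · -- the characterization
      intro x
      show (if inM τ ((x : R) : ℂ) then (0 : ZMod 2) else 1) = 0 ↔ inM τ ((x : R) : ℂ)
      by_cases h : inM τ ((x : R) : ℂ)
      · simp [h]
      · simp [h]
  have hsurj : Function.Surjective φ := by
    intro z
    have hz : ∀ w : ZMod 2, w = 0 ∨ w = 1 := by decide
    rcases hz z with rfl | rfl
    · exact ⟨0, map_zero φ⟩
    · exact ⟨1, map_one φ⟩
  have h2R : ((2:R) : ℂ) = 2 := by norm_cast
  have hker : RingHom.ker φ = 𝔪 := by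
    ext x
    rw [RingHom.mem_ker, hφ, h𝔪]
    constructor
    · rintro ⟨p, q, r, hx⟩
      have hxeq : x = (p : R) * 2 + (q : R) * a + (r : R) * b := by
        apply Subtype.ext
        push_cast [h2R, ha, hb]
        linear_combination hx
      rw [hxeq]
      refine add_mem (add_mem ?_ ?_) ?_ <;>
        exact Ideal.mul_mem_left _ _ (Ideal.subset_span (by simp))
    · intro hx
      induction hx using Submodule.span_induction with
      | mem y hy =>
        rcases hy with hy | hy | hy
        · rw [hy]; exact ⟨1, 0, 0, by rw [h2R]; norm_num⟩
        · rw [hy]; exact ⟨0, 1, 0, by rw [ha]; push_cast; ring⟩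
        · rw [Set.mem_singleton_iff.mp hy]; exact ⟨0, 0, 1, by rw [hb]; push_cast; ring⟩
      | zero => exact ⟨0, 0, 0, by norm_num⟩
      | add u v _ _ hu hv =>
        have h := inM_add hu hv
        rw [AddMemClass.coe_add]
        exact h
      | smul c y _ hy =>
        have h := inM_mul_inT hτ hy (hT c)
        rw [smul_eq_mul, MulMemClass.coe_mul, mul_comm]
        exact h
  have hmax : 𝔪.IsMaximal := hker ▸ RingHom.ker_isMaximal_of_surjective φ hsurj
  exact ⟨hmax, ⟨(Ideal.quotEquivOfEq hker.symm).trans (RingHom.quotientKerEquivOfSurjective hsurj)⟩⟩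
end

section
/- Let ζ₇ ∈ ℂ be a primitive seventh root of unity, τ := ζ₇ + ζ₇⁻¹, and R := ℤ[2τ, 2τ²]. For every odd integer c, the element c·(2τ²) is not contained in the ideal of R generated by 2 and 2τ. -/
open Polynomial

-- independence lemma
lemma indep7 (ζ : ℂ) (hζ : IsPrimitiveRoot ζ 7) (p q r : ℤ)
    (h : (p : ℂ) + q * (ζ + ζ⁻¹) + r * (ζ + ζ⁻¹) ^ 2 = 0) : r = 0 := by
  have hζ0 : ζ ≠ 0 := hζ.ne_zero (by norm_num)
  have h7 : ζ ^ 7 = 1 := hζ.pow_eq_one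
  have hinv : ζ⁻¹ = ζ ^ 6 := inv_eq_of_mul_eq_one_right (by rw [← pow_succ']; exact h7)
  have hsum : 1 + ζ + ζ^2 + ζ^3 + ζ^4 + ζ^5 + ζ^6 = 0 := by
    have := hζ.geom_sum_eq_zero (by norm_num)
    simpa [Finset.sum_range_succ] using this
  set P : ℚ[X] := C ((p : ℚ) + 2*r - q) + C ((r : ℚ) - q) * X^2 - C (q : ℚ) * X^3
      - C (q : ℚ) * X^4 + C ((r : ℚ) - q) * X^5 with hP
  have haev : aeval ζ P = 0 := by
    rw [hP]
    simp only [map_add, map_sub, map_mul, aeval_C, aeval_X, map_pow, eq_ratCast]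
    push_cast
    rw [hinv] at h
    linear_combination h - (q : ℂ) * hsum - (2*(r:ℂ) + (r:ℂ)*ζ^5) * h7
  have hP0 : P = 0 := by
    by_contra hne
    have hd : (minpoly ℚ ζ).degree ≤ P.degree := minpoly.degree_le_of_ne_zero ℚ ζ hne haev
    have hmp : minpoly ℚ ζ = cyclotomic 7 ℚ := (cyclotomic_eq_minpoly_rat hζ (by norm_num)).symm
    rw [hmp] at hd
    have hdc : (cyclotomic 7 ℚ).degree = 6 := by
      rw [degree_cyclotomic]
      norm_num [Nat.totient_prime (by norm_num : Nat.Prime 7)]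
    have hPd : P.degree ≤ 5 := by
      rw [hP]
      compute_degree
    rw [hdc] at hd
    have := hd.trans hPd
    norm_num at this
  have h3 : P.coeff 3 = 0 := by rw [hP0]; simp
  have h2 : P.coeff 2 = 0 := by rw [hP0]; simp
  rw [hP] at h3 h2
  simp only [coeff_add, coeff_sub, coeff_C_mul, coeff_X_pow, coeff_C] at h3 h2
  norm_num at h3 h2
  simp [h3] at h2
  exact h2

/-- Let `ζ₇ ∈ ℂ` be a primitive seventh root of unity,
`τ := ζ₇ + ζ₇⁻¹` and `R := ℤ[2τ, 2τ²]`. For every odd integer `c`, the element `c·(2τ²)`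
is not contained in the ideal of `R` generated by `2` and `2τ`. -/
theorem stmt_10 (ζ : ℂ) (hζ : IsPrimitiveRoot ζ 7)
    (R : Subalgebra ℤ ℂ)
    (hR : R = Algebra.adjoin ℤ {2 * (ζ + ζ⁻¹), 2 * (ζ + ζ⁻¹) ^ 2})
    (a b : R) (ha : (a : ℂ) = 2 * (ζ + ζ⁻¹)) (hb : (b : ℂ) = 2 * (ζ + ζ⁻¹) ^ 2) :
    ∀ c : ℤ, Odd c → (c : R) * b ∉ Ideal.span {(2 : R), a} := by
  have hζ0 : ζ ≠ 0 := hζ.ne_zero (by norm_num)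
  have h7 : ζ ^ 7 = 1 := hζ.pow_eq_one
  have hsum : 1 + ζ + ζ^2 + ζ^3 + ζ^4 + ζ^5 + ζ^6 = 0 := by
    have := hζ.geom_sum_eq_zero (by norm_num)
    simpa [Finset.sum_range_succ] using this
  set τ : ℂ := ζ + ζ⁻¹ with hτ
  have hinv : ζ⁻¹ = ζ ^ 6 := inv_eq_of_mul_eq_one_right (by rw [← pow_succ']; exact h7)
  have hrel : τ ^ 3 + τ ^ 2 - 2 * τ - 1 = 0 := by
    rw [hτ, hinv]
    linear_combination hsum + (ζ^11 + 3*ζ^6 + ζ^5 + ζ^4 + 3*ζ + 2) * h7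
  -- every element of R has the required form
  have hform : ∀ z : ℂ, z ∈ R → ∃ m n k : ℤ,
      z = (m : ℂ) + n * (2 * τ) + k * (2 * τ ^ 2) := by
    intro z hz
    rw [hR] at hz
    induction hz using Algebra.adjoin_induction with
    | mem x hx =>
      rcases hx with hx | hx
      · exact ⟨0, 1, 0, by rw [hx]; push_cast; ring⟩
      · exact ⟨0, 0, 1, by rw [Set.mem_singleton_iff] at hx; rw [hx]; push_cast; ring⟩
    | algebraMap r => exact ⟨r, 0, 0, by push_cast; simp⟩
    | add x y hx hy ihx ihy =>
      obtain ⟨m, n, k, h1⟩ := ihx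
      obtain ⟨m', n', k', h2⟩ := ihy
      exact ⟨m + m', n + n', k + k', by rw [h1, h2]; push_cast; ring⟩
    | mul x y hx hy ihx ihy =>
      obtain ⟨m, n, k, h1⟩ := ihx
      obtain ⟨m', n', k', h2⟩ := ihy
      refine ⟨m*m' + 4*(n*k' + k*n') - 4*(k*k'), m*n' + n*m' + 4*(n*k'+k*n') - 2*(k*k'),
        m*k' + k*m' + 2*(n*n') - 2*(n*k'+k*n') + 6*(k*k'), ?_⟩
      rw [h1, h2]
      push_cast
      linear_combination (4*((n:ℂ)*k' + k*n') + 4*(k:ℂ)*k'*(τ - 1)) * hrel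
  intro c hc hmem
  rw [Ideal.mem_span_pair] at hmem
  obtain ⟨r, s, hrs⟩ := hmem
  obtain ⟨m, n, k, h1⟩ := hform r r.2
  obtain ⟨m', n', k', h2⟩ := hform s s.2
  -- push hrs to ℂ
  have hC : (r : ℂ) * 2 + (s : ℂ) * (a : ℂ) = (c : ℂ) * (b : ℂ) := by
    have := congrArg (Subtype.val) hrs
    push_cast [MulMemClass.coe_mul, AddMemClass.coe_add] at this
    convert this using 2
    rw [show ((2 : R) : ℂ) = 2 from map_ofNat R.val 2]
  rw [ha, hb, h1, h2] at hC
  have key : ((2*m + 4*k' : ℤ) : ℂ) + ((2*(2*n + m' + 4*k') : ℤ)) * τ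
      + ((2*(2*k + 2*n' - 2*k' - c) : ℤ)) * τ ^ 2 = 0 := by
    push_cast
    linear_combination hC - 4*(k' : ℂ) * hrel
  have := indep7 ζ hζ _ _ _ key
  have : c = 2*k + 2*n' - 2*k' := by omega
  rw [Int.odd_iff] at hc
  omega
end

section
/- Let M be the 6×6 rational matrix which is block diagonal with two copies of the 3×3 matrix with rows (0,0,1), (1,0,2), (0,1,−1), and let X be the 6×6 rational matrix which is block diagonal with two copies of the 3×3 matrix with rows (2,−1,2), (−1,2,−2), (2,−2,5). Then: (i) X·M = Mᵀ·X; (ii) the minimal polynomial of M over ℚ is x³ + x² − 2x − 1; (iii) the characteristic polynomial of X is (x−1)⁴(x−7)²; and (iv) X is positive definite. -/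
open Matrix

@[simp] lemma aux_c65 {α : Type*} (x : α) (u : Fin 5 → α) : vecCons x u 5 = u 4 := rfl
@[simp] lemma aux_c64 {α : Type*} (x : α) (u : Fin 5 → α) : vecCons x u 4 = u 3 := rfl
@[simp] lemma aux_c63 {α : Type*} (x : α) (u : Fin 5 → α) : vecCons x u 3 = u 2 := rfl
@[simp] lemma aux_c62 {α : Type*} (x : α) (u : Fin 5 → α) : vecCons x u 2 = u 1 := rfl
@[simp] lemma aux_c54 {α : Type*} (x : α) (u : Fin 4 → α) : vecCons x u 4 = u 3 := rfl
@[simp] lemma aux_c53 {α : Type*} (x : α) (u : Fin 4 → α) : vecCons x u 3 = u 2 := rfl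
@[simp] lemma aux_c52 {α : Type*} (x : α) (u : Fin 4 → α) : vecCons x u 2 = u 1 := rfl
@[simp] lemma aux_c43 {α : Type*} (x : α) (u : Fin 3 → α) : vecCons x u 3 = u 2 := rfl
@[simp] lemma aux_c42 {α : Type*} (x : α) (u : Fin 3 → α) : vecCons x u 2 = u 1 := rfl
@[simp] lemma aux_c32 {α : Type*} (x : α) (u : Fin 2 → α) : vecCons x u 2 = u 1 := rfl
@[simp] lemma aux_tail_const {α : Type*} {n : ℕ} (x : α) :
    vecTail (fun _ : Fin (n + 1) => x) = fun _ => x := rfl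
@[simp] lemma aux_head_const {α : Type*} {n : ℕ} (x : α) :
    vecHead (fun _ : Fin (n + 1) => x) = x := rfl

open Polynomial in
lemma aux_irred : Irreducible (X ^ 3 + X ^ 2 - 2 * X - 1 : ℚ[X]) := by
  have hq : ((X ^ 3 + X ^ 2 - 2 * X - 1 : ℤ[X]).map (algebraMap ℤ ℚ))
      = (X ^ 3 + X ^ 2 - 2 * X - 1 : ℚ[X]) := by
    simp [Polynomial.map_sub, Polynomial.map_add, Polynomial.map_mul, Polynomial.map_pow]
  have hmonic : (X ^ 3 + X ^ 2 - 2 * X - 1 : ℤ[X]).Monic := by monicity!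
  have hdeg : (X ^ 3 + X ^ 2 - 2 * X - 1 : ℚ[X]).natDegree = 3 := by compute_degree!
  rw [irreducible_iff_roots_eq_zero_of_degree_le_three (by omega) (by omega)]
  rw [Multiset.eq_zero_iff_forall_notMem]
  intro r hr
  rw [mem_roots] at hr
  · obtain ⟨m, rfl, hdvd⟩ := exists_integer_of_is_root_of_monic hmonic (r := r) (by
      rw [aeval_def, ← eval_map, hq]; exact hr)
    have : m ∣ -1 := by simpa using hdvd
    have hm : m = 1 ∨ m = -1 := by
      rcases Int.isUnit_iff.mp (isUnit_of_dvd_unit this (by norm_num)) with h | h <;> tauto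
    rcases hm with rfl | rfl <;> simp [IsRoot] at hr <;> norm_num at hr
  · intro h; rw [h] at hdeg; simp at hdeg

open Polynomial in
lemma aux_charpoly_A :
    (Matrix.of ![![(2:ℚ), -1, 2], ![-1, 2, -2], ![2, -2, 5]]).charpoly
      = (X - 1) ^ 2 * (X - 7) := by
  rw [Matrix.charpoly, Matrix.det_fin_three]
  simp [Matrix.charmatrix_apply, Matrix.diagonal_apply, map_ofNat]
  ring

set_option maxHeartbeats 2000000 in
/-- Let `M` and `X` be the explicit block-diagonal `6×6` rational
matrices below. Then (i) `X·M = Mᵀ·X`; (ii) the minimal polynomial of `M` over `ℚ` is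
`x³ + x² − 2x − 1`; (iii) the characteristic polynomial of `X` is `(x−1)⁴(x−7)²`; and
(iv) `X` is positive definite: `vᵀXv > 0` for every nonzero `v`. -/
theorem stmt_11 (M X : Matrix (Fin 6) (Fin 6) ℚ)
    (hM : M = Matrix.of
      ![![0, 0, 1, 0, 0, 0],
        ![1, 0, 2, 0, 0, 0],
        ![0, 1, -1, 0, 0, 0],
        ![0, 0, 0, 0, 0, 1],
        ![0, 0, 0, 1, 0, 2],
        ![0, 0, 0, 0, 1, -1]])
    (hX : X = Matrix.of
      ![![2, -1, 2, 0, 0, 0],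
        ![-1, 2, -2, 0, 0, 0],
        ![2, -2, 5, 0, 0, 0],
        ![0, 0, 0, 2, -1, 2],
        ![0, 0, 0, -1, 2, -2],
        ![0, 0, 0, 2, -2, 5]]) :
    X * M = Mᵀ * X ∧
      minpoly ℚ M =
        Polynomial.X ^ 3 + Polynomial.X ^ 2 - 2 * Polynomial.X - 1 ∧
      X.charpoly = (Polynomial.X - 1) ^ 4 * (Polynomial.X - 7) ^ 2 ∧
      ∀ v : Fin 6 → ℚ, v ≠ 0 → 0 < v ⬝ᵥ X.mulVec v := by
  refine ⟨?_, ?_, ?_, ?_⟩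
  · have hMt : Mᵀ = Matrix.of
        ![![0, 1, 0, 0, 0, 0],
          ![0, 0, 1, 0, 0, 0],
          ![1, 2, -1, 0, 0, 0],
          ![0, 0, 0, 0, 1, 0],
          ![0, 0, 0, 0, 0, 1],
          ![0, 0, 0, 1, 2, -1]] := by
      subst hM
      ext i j
      fin_cases i <;> fin_cases j <;> rfl
    have hL : X * M = Matrix.of
        ![![-1, 2, -2, 0, 0, 0],
          ![2, -2, 5, 0, 0, 0],
          ![-2, 5, -7, 0, 0, 0],
          ![0, 0, 0, -1, 2, -2],
          ![0, 0, 0, 2, -2, 5],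
          ![0, 0, 0, -2, 5, -7]] := by
      subst hM hX
      ext i j
      fin_cases i <;> fin_cases j <;>
        norm_num [Matrix.mul_apply, Fin.sum_univ_six]
    have hR : Mᵀ * X = Matrix.of
        ![![-1, 2, -2, 0, 0, 0],
          ![2, -2, 5, 0, 0, 0],
          ![-2, 5, -7, 0, 0, 0],
          ![0, 0, 0, -1, 2, -2],
          ![0, 0, 0, 2, -2, 5],
          ![0, 0, 0, -2, 5, -7]] := by
      rw [hMt]; subst hX
      ext i j
      fin_cases i <;> fin_cases j <;>
        norm_num [Matrix.mul_apply, Fin.sum_univ_six]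
    rw [hL, hR]
  · -- minimal polynomial
    have h2 : M * M = Matrix.of
        ![![0, 1, -1, 0, 0, 0],
          ![0, 2, -1, 0, 0, 0],
          ![1, -1, 3, 0, 0, 0],
          ![0, 0, 0, 0, 1, -1],
          ![0, 0, 0, 0, 2, -1],
          ![0, 0, 0, 1, -1, 3]] := by
      subst hM
      ext i j
      fin_cases i <;> fin_cases j <;>
        norm_num [Matrix.mul_apply, Fin.sum_univ_six]
    have h3 : M * M * M = Matrix.of
        ![![1, -1, 3, 0, 0, 0],
          ![2, -1, 5, 0, 0, 0],
          ![-1, 3, -4, 0, 0, 0],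
          ![0, 0, 0, 1, -1, 3],
          ![0, 0, 0, 2, -1, 5],
          ![0, 0, 0, -1, 3, -4]] := by
      rw [h2]; subst hM
      ext i j
      fin_cases i <;> fin_cases j <;>
        norm_num [Matrix.mul_apply, Fin.sum_univ_six]
    have haev : (Polynomial.aeval M)
        (Polynomial.X ^ 3 + Polynomial.X ^ 2 - 2 * Polynomial.X - 1 : Polynomial ℚ) = 0 := by
      have : (Polynomial.aeval M)
          (Polynomial.X ^ 3 + Polynomial.X ^ 2 - 2 * Polynomial.X - 1 : Polynomial ℚ)
          = M * M * M + M * M - 2 * M - 1 := by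
        simp [pow_succ, mul_assoc, map_ofNat]
      rw [this, h3, h2, two_mul]
      subst hM
      ext i j
      fin_cases i <;> fin_cases j <;>
        norm_num [Matrix.one_apply, Fin.ext_iff]
    exact (minpoly.eq_of_irreducible_of_monic aux_irred haev (by monicity!)).symm
  · -- charpoly
    have hblock : X = Matrix.reindex finSumFinEquiv finSumFinEquiv
        (Matrix.fromBlocks
          (Matrix.of ![![(2:ℚ), -1, 2], ![-1, 2, -2], ![2, -2, 5]]) 0 0
          (Matrix.of ![![(2:ℚ), -1, 2], ![-1, 2, -2], ![2, -2, 5]])) := by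
      subst hX
      ext i j
      fin_cases i <;> fin_cases j <;>
        simp [Matrix.reindex_apply, Matrix.submatrix_apply, finSumFinEquiv,
          Matrix.fromBlocks, Equiv.symm, Fin.addCases] <;> rfl
    rw [hblock, Matrix.charpoly_reindex, Matrix.charpoly_fromBlocks_zero₁₂, aux_charpoly_A]
    ring
  · -- positive definiteness
    intro v hv
    have hexp : v ⬝ᵥ X.mulVec v
        = (v 0 - v 1 + 2 * v 2) ^ 2 + v 0 ^ 2 + v 1 ^ 2 + v 2 ^ 2
          + (v 3 - v 4 + 2 * v 5) ^ 2 + v 3 ^ 2 + v 4 ^ 2 + v 5 ^ 2 := by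
      subst hX
      simp [dotProduct, Matrix.mulVec, Fin.sum_univ_six]
      ring
    rw [hexp]
    have key : v 0 ≠ 0 ∨ v 1 ≠ 0 ∨ v 2 ≠ 0 ∨ v 3 ≠ 0 ∨ v 4 ≠ 0 ∨ v 5 ≠ 0 := by
      by_contra h
      push_neg at h
      obtain ⟨h0, h1, h2, h3, h4, h5⟩ := h
      exact hv (funext fun i => by fin_cases i <;> assumption)
    rcases key with h | h | h | h | h | h <;>
      nlinarith [sq_nonneg (v 0 - v 1 + 2 * v 2), sq_nonneg (v 3 - v 4 + 2 * v 5),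
        sq_nonneg (v 0), sq_nonneg (v 1), sq_nonneg (v 2), sq_nonneg (v 3),
        sq_nonneg (v 4), sq_nonneg (v 5), sq_pos_of_ne_zero h]
end

section
/- Let B be the elliptic curve over ℚ defined by the Weierstrass equation y² = x³ + 5. Then the point R = (−1, 2) lies in B(ℚ) and has infinite order in the group B(ℚ); that is, R is not a torsion point. -/
open WeierstrassCurve WeierstrassCurve.Affine

noncomputable def Bc : WeierstrassCurve ℚ := ⟨0, 0, 0, 0, 5⟩

lemma val2nat (n : ℕ) (hn : ¬ 2 ∣ n) : padicValRat 2 (n:ℚ) = 0 := by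
  rw [padicValRat.of_nat]; simp [padicValNat.eq_zero_of_not_dvd hn]

lemma val2two : padicValRat 2 (2:ℚ) = 1 := by
  rw [show (2:ℚ) = ((2:ℕ):ℚ) by norm_num, padicValRat.self (by norm_num)]

lemma Bc_eq : Bc.toAffine.Nonsingular (-1) 2 := by
  rw [nonsingular_iff, equation_iff]
  simp [Bc]
  norm_num

lemma double {x y : ℚ} (h : Bc.toAffine.Nonsingular x y) {k : ℤ} (hk : 2 ≤ k)
    (hv : padicValRat 2 x = -(2*k)) :
    ∃ (x' y' : ℚ) (h' : Bc.toAffine.Nonsingular x' y'),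
      (Point.some _ _ h + Point.some _ _ h = Point.some _ _ h') ∧
        padicValRat 2 x' = -(2*(k+1)) := by
  have heq : y^2 = x^3 + 5 := by
    have := h.1; rw [equation_iff] at this; simpa [Bc] using this
  have hx0 : x ≠ 0 := by
    intro hc; rw [hc, padicValRat.zero] at hv; omega
  have hx3v : padicValRat 2 (x^3) = -(6*k) := by
    rw [padicValRat.pow x, hv]; push_cast; ring
  have hx35 : x^3 + 5 ≠ 0 := by
    intro hc
    have hx3 : x^3 = -5 := by linarith
    rw [hx3, show (-5:ℚ) = -((5:ℕ):ℚ) by norm_num, padicValRat.neg,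
      val2nat 5 (by norm_num)] at hx3v
    omega
  have hv35 : padicValRat 2 (x^3 + 5) = -(6*k) := by
    rw [padicValRat.add_eq_of_lt hx35 (pow_ne_zero 3 hx0) (by norm_num)
      (by rw [hx3v, show (5:ℚ) = ((5:ℕ):ℚ) by norm_num, val2nat 5 (by norm_num)]; omega)]
    exact hx3v
  have hy0 : y ≠ 0 := by
    intro hc; rw [hc] at heq; exact hx35 (by linarith)
  have hvy : padicValRat 2 y = -(3*k) := by
    have h2 : padicValRat 2 (y^2) = -(6*k) := by rw [heq]; exact hv35
    rw [padicValRat.pow y] at h2; push_cast at h2; omega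
  have hy_ne : y ≠ Bc.toAffine.negY x y := by
    simp only [negY, Bc]; intro hc
    apply hy0; norm_num at hc; linarith
  set L := Bc.toAffine.slope x x y y with hLdef
  have hs : L = 3*x^2/(2*y) := by
    rw [hLdef, slope_of_Y_ne rfl hy_ne]; simp [Bc]; ring
  have hL0 : L ≠ 0 := by
    rw [hs]
    exact div_ne_zero (by positivity) (by simpa using hy0)
  have hvL : padicValRat 2 L = -(k+1) := by
    rw [hs, padicValRat.div (by positivity) (by simpa using hy0),
      padicValRat.mul (by norm_num) (pow_ne_zero 2 hx0),
      padicValRat.mul (by norm_num) hy0,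
      padicValRat.pow x, hv, hvy, val2two,
      show (3:ℚ) = ((3:ℕ):ℚ) by norm_num, val2nat 3 (by norm_num)]
    push_cast; ring
  have haddX : Bc.toAffine.addX x x L = L^2 + (-(2*x)) := by
    simp [addX, Bc]; ring
  have hL2 : padicValRat 2 (L^2) = -(2*k+2) := by
    rw [padicValRat.pow L, hvL]; push_cast; ring
  have h2x : padicValRat 2 (-(2*x)) = 1 - 2*k := by
    rw [padicValRat.neg, padicValRat.mul (by norm_num) hx0, val2two, hv]; ring
  have hsum : L^2 + (-(2*x)) ≠ 0 := by
    intro hc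
    have : L^2 = 2*x := by linarith
    rw [this, padicValRat.mul (by norm_num) hx0, val2two, hv] at hL2
    omega
  have hvx' : padicValRat 2 (Bc.toAffine.addX x x L) = -(2*(k+1)) := by
    rw [haddX, padicValRat.add_eq_of_lt hsum (pow_ne_zero 2 hL0)
      (by intro hc; rw [hc, padicValRat.zero] at h2x; omega)
      (by rw [hL2, h2x]; omega), hL2]
    ring
  exact ⟨_, _, nonsingular_add h h (fun hc => hy_ne hc.2), Point.add_self_of_Y_ne hy_ne, hvx'⟩

lemma base :
    ∃ (x y : ℚ) (h : Bc.toAffine.Nonsingular x y),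
      (Point.some _ _ Bc_eq + Point.some _ _ Bc_eq = Point.some _ _ h) ∧
        padicValRat 2 x = -(2*((0:ℤ)+2)) := by
  have hy_ne : (2:ℚ) ≠ Bc.toAffine.negY (-1) 2 := by
    simp [negY, Bc]; norm_num
  have hs : Bc.toAffine.slope (-1) (-1) 2 2 = 3/4 := by
    rw [slope_of_Y_ne rfl hy_ne]; simp [Bc]; norm_num
  have hx' : Bc.toAffine.addX (-1) (-1) (Bc.toAffine.slope (-1) (-1) 2 2) = 41/16 := by
    rw [hs]; simp [addX, Bc]; norm_num
  refine ⟨_, _, nonsingular_add Bc_eq Bc_eq (fun hc => hy_ne hc.2),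
    Point.add_self_of_Y_ne hy_ne, ?_⟩
  rw [hx', show (41/16 : ℚ) = 41 / 2^4 by norm_num,
    padicValRat.div (by norm_num) (by norm_num),
    padicValRat.pow _, val2two,
    show ((41:ℚ)) = ((41:ℕ):ℚ) by norm_num, val2nat 41 (by norm_num)]
  norm_num

lemma key (n : ℕ) :
    ∃ (x y : ℚ) (h : Bc.toAffine.Nonsingular x y),
      ((2^(n+1)) • (Point.some _ _ Bc_eq) = Point.some _ _ h) ∧
        padicValRat 2 x = -(2*((n:ℤ)+2)) := by
  induction n with
  | zero =>
    obtain ⟨x, y, h, he, hval⟩ := base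
    exact ⟨x, y, h, by rw [pow_one, two_nsmul]; exact he, hval⟩
  | succ n ih =>
    obtain ⟨x, y, h, he, hval⟩ := ih
    obtain ⟨x', y', h', he', hval'⟩ := double h (by omega : 2 ≤ (n:ℤ)+2) hval
    refine ⟨x', y', h', ?_, by push_cast; linarith⟩
    rw [show n+1+1 = (n+1)+1 from rfl, pow_succ, mul_comm, mul_smul, two_nsmul, he]
    exact he'

/-- Let `B` be the elliptic curve over `ℚ` defined by `y² = x³ + 5`.
Then `R = (−1, 2)` is a (nonsingular) rational point on `B` and it has infinite order in
the group `B(ℚ)`, i.e. it is not a torsion point. -/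
theorem stmt_12 (W : WeierstrassCurve ℚ) (hW : W = ⟨0, 0, 0, 0, 5⟩) :
    ∃ h : W.toAffine.Nonsingular (-1) 2,
      ¬ IsOfFinAddOrder (WeierstrassCurve.Affine.Point.some _ _ h) := by
  subst hW
  refine ⟨Bc_eq, ?_⟩
  intro hfin
  have hfinset := finite_multiples.mpr hfin
  haveI : Finite (AddSubmonoid.multiples (Point.some _ _ Bc_eq)) := hfinset.to_subtype
  obtain ⟨n, m, hnm, hg⟩ := Finite.exists_ne_map_eq_of_infinite
    (fun n : ℕ => (⟨(2^(n+1)) • (Point.some _ _ Bc_eq), ⟨2^(n+1), rfl⟩⟩ :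
      ↑(AddSubmonoid.multiples (Point.some _ _ Bc_eq))))
  have hfe : (2^(n+1)) • (Point.some _ _ Bc_eq) = (2^(m+1)) • (Point.some _ _ Bc_eq) := by
    simpa using congrArg Subtype.val hg
  obtain ⟨x₁, y₁, h₁, he₁, hv₁⟩ := key n
  obtain ⟨x₂, y₂, h₂, he₂, hv₂⟩ := key m
  rw [he₁, he₂] at hfe
  have hx : x₁ = x₂ := by
    cases hfe; rfl
  rw [hx, hv₂] at hv₁
  omega
end

section
/- Let B be the elliptic curve over ℚ defined by the Weierstrass equation y² = x³ + 5. Then B has no nontrivial torsion over ℚ: every point of finite order in the group B(ℚ) is the identity (the point at infinity). -/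
/-- `5` is not the cube of a rational number. -/
lemma rat_cube_ne_five (r : ℚ) : r ^ 3 ≠ 5 := by
  intro h
  have hd : (r.den : ℚ) ≠ 0 := Nat.cast_ne_zero.mpr r.den_nz
  have hr : (r.num : ℚ) = r * r.den := by
    nth_rewrite 2 [← Rat.num_div_den r]; field_simp
  have key : (r.num : ℚ) ^ 3 = 5 * (r.den : ℚ) ^ 3 := by
    rw [hr]; linear_combination (r.den : ℚ) ^ 3 * h
  have keyZ : r.num ^ 3 = 5 * (r.den : ℤ) ^ 3 := by exact_mod_cast key
  have hp : Prime (5 : ℤ) := by norm_num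
  have h5n : (5 : ℤ) ∣ r.num := hp.dvd_of_dvd_pow ⟨(r.den : ℤ) ^ 3, keyZ⟩
  obtain ⟨k, hk⟩ := h5n
  have keyZ2 : (r.den : ℤ) ^ 3 = 5 * (5 * k ^ 3) := by
    have h125 : 125 * k ^ 3 = 5 * (r.den : ℤ) ^ 3 := by rw [hk] at keyZ; linear_combination keyZ
    linarith
  have h5d : (5 : ℤ) ∣ (r.den : ℤ) := hp.dvd_of_dvd_pow ⟨5 * k ^ 3, keyZ2⟩
  have h5dn : (5 : ℕ) ∣ r.den := by exact_mod_cast h5d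
  have h5nn : (5 : ℕ) ∣ r.num.natAbs := by rw [hk]; simp [Int.natAbs_mul]
  have := Nat.Coprime.eq_one_of_dvd (Nat.Coprime.coprime_dvd_left h5nn r.reduced) h5dn
  norm_num at this


lemma num_eq_mul_den (r : ℚ) : (r.num : ℚ) = r * r.den := by
  nth_rewrite 2 [← Rat.num_div_den r]; field_simp

lemma sq_odd_mod8 (d : ℤ) (hd : ¬ (2 ∣ d)) : ((d : ZMod 8)) ^ 2 = 1 := by
  obtain ⟨k, hk⟩ := Int.not_even_iff_odd.mp (fun he => hd he.two_dvd)
  obtain ⟨j, hj⟩ := Int.even_mul_succ_self k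
  have h8 : d ^ 2 = 8 * j + 1 := by rw [hk]; ring_nf; linarith [hj]
  have h2 : ((d ^ 2 : ℤ) : ZMod 8) = ((8 * j + 1 : ℤ) : ZMod 8) := by rw [h8]
  push_cast at h2
  rw [show ((8 : ZMod 8)) = 0 by decide] at h2
  simpa using h2

lemma core (x y : ℚ) (heq : y ^ 2 = x ^ 3 + 5) (hy : y ≠ 0) :
    x.den < ((3 * x ^ 2 / (2 * y)) ^ 2 - 2 * x).den := by
  set a : ℤ := x.num with ha
  set c : ℤ := y.num with hc
  have hm0 : (0:ℤ) < (x.den : ℤ) := by exact_mod_cast x.pos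
  have hd0 : (0:ℤ) < (y.den : ℤ) := by exact_mod_cast y.pos
  have hmQ : ((x.den : ℤ) : ℚ) ≠ 0 := by positivity
  have hdQ : ((y.den : ℤ) : ℚ) ≠ 0 := by positivity
  have hxa : (a : ℚ) = x * (x.den : ℤ) := by push_cast; exact num_eq_mul_den x
  have hyc : (c : ℚ) = y * (y.den : ℤ) := by push_cast; exact num_eq_mul_den y
  set m : ℤ := (x.den : ℤ) with hmdef
  set d : ℤ := (y.den : ℤ)
  have hc0 : c ≠ 0 := by
    intro h0
    apply hy
    rw [← Rat.num_div_den y, ← hc, h0]; simp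
  have hcQ : (c : ℚ) ≠ 0 := by exact_mod_cast hc0
  have hcop_am : IsCoprime a m := by
    rw [Int.isCoprime_iff_gcd_eq_one]; exact_mod_cast x.reduced
  have hcop_cd : IsCoprime c d := by
    rw [Int.isCoprime_iff_gcd_eq_one]; exact_mod_cast y.reduced
  have keyZ : c ^ 2 * m ^ 3 = (a ^ 3 + 5 * m ^ 3) * d ^ 2 := by
    have : (c : ℚ) ^ 2 * (m:ℚ) ^ 3 = ((a:ℚ) ^ 3 + 5 * (m:ℚ) ^ 3) * (d:ℚ) ^ 2 := by
      rw [hxa, hyc]; linear_combination (d:ℚ)^2 * (m:ℚ)^3 * heq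
    exact_mod_cast this
  have hd2m3 : d ^ 2 = m ^ 3 := by
    have h1 : d ^ 2 ∣ m ^ 3 := by
      have hdc : IsCoprime (d ^ 2) (c ^ 2) := hcop_cd.symm.pow
      exact hdc.dvd_of_dvd_mul_left ⟨(a ^ 3 + 5 * m ^ 3), by linarith [keyZ]⟩
    have h2 : m ^ 3 ∣ d ^ 2 := by
      have hma : IsCoprime (m ^ 3) (a ^ 3) := hcop_am.symm.pow
      exact hma.dvd_of_dvd_mul_left ⟨c ^ 2 - 5 * d ^ 2, by linarith [keyZ]⟩
    exact Int.dvd_antisymm (by positivity) (by positivity) h1 h2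
  have hc2 : c ^ 2 = a ^ 3 + 5 * m ^ 3 := by
    rw [hd2m3] at keyZ
    exact mul_right_cancel₀ (by positivity : m ^ 3 ≠ (0:ℤ)) keyZ
  -- a is odd
  have haodd : ¬ (2 ∣ a) := by
    intro h2a
    obtain ⟨a0, ha0⟩ := h2a
    have hmodd : ¬ (2 ∣ m) := by
      intro h2m
      have h22 : IsCoprime (2:ℤ) (2:ℤ) := IsCoprime.of_isCoprime_of_dvd_left
          (IsCoprime.of_isCoprime_of_dvd_right hcop_am h2m) ⟨a0, ha0⟩
      rw [Int.isCoprime_iff_gcd_eq_one] at h22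
      norm_num at h22
    have hdodd : ¬ (2 ∣ d) := by
      intro hdd
      obtain ⟨d0, hdd⟩ := hdd
      have h2m3 : (2:ℤ) ∣ m ^ 3 := by rw [← hd2m3, hdd]; exact ⟨2 * d0 ^ 2, by ring⟩
      exact hmodd (Int.Prime.dvd_pow' (by norm_num) h2m3)
    have hm8 : ((m : ZMod 8)) ^ 3 = 1 := by
      have hsq := sq_odd_mod8 d hdodd
      have h3 : ((m ^ 3 : ℤ) : ZMod 8) = ((d ^ 2 : ℤ) : ZMod 8) := by rw [hd2m3]
      push_cast at h3
      rw [← h3] at hsq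
      exact hsq
    have hcast : ((c : ZMod 8)) ^ 2 = 8 * (a0:ZMod 8) ^ 3 + 5 * ((m:ZMod 8)) ^ 3 := by
      have h4 : ((c ^ 2 : ℤ) : ZMod 8) = (((2 * a0) ^ 3 + 5 * m ^ 3 : ℤ) : ZMod 8) := by
        rw [hc2, ha0]
      push_cast at h4
      rw [h4]; ring
    rw [hm8, show ((8 : ZMod 8)) = 0 by decide] at hcast
    have hfin : ((c : ZMod 8)) ^ 2 = 5 := by rw [hcast]; ring
    exact (by decide : ∀ z : ZMod 8, z ^ 2 ≠ 5) _ hfin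
  -- N and D
  set N : ℤ := a * (a ^ 3 - 40 * m ^ 3) with hN
  set D : ℤ := 4 * c ^ 2 * m with hD
  have hD0 : D ≠ 0 := by simp only [hD]; positivity
  have hDQ : ((D : ℤ) : ℚ) ≠ 0 := by exact_mod_cast hD0
  set x2 : ℚ := (3 * x ^ 2 / (2 * y)) ^ 2 - 2 * x with hx2
  have hd2Q : ((d : ℚ)) ^ 2 = ((m : ℚ)) ^ 3 := by exact_mod_cast hd2m3
  have hx2D : x2 * (D : ℚ) = (N : ℚ) := by
    rw [hx2]
    push_cast [hN, hD]
    rw [hxa, hyc]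
    field_simp
    linear_combination (4*x*(9*x^3 - 8*y^2)) * hd2Q + (-32*x*(m:ℚ)^3) * heq
  have hx2ND : x2 = (N:ℚ)/(D:ℚ) := by rw [eq_div_iff hDQ]; exact hx2D
  have hden0 : ((x2.den : ℤ) : ℚ) ≠ 0 := by
    have := x2.pos; positivity
  have hcross : x2.num * D = N * (x2.den : ℤ) := by
    have h5 : (x2.num : ℚ)/(x2.den:ℚ) = (N:ℚ)/(D:ℚ) := by
      rw [Rat.num_div_den]; exact hx2ND
    rw [div_eq_div_iff (by exact_mod_cast hden0) hDQ] at h5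
    exact_mod_cast h5
  have hcopmN : IsCoprime m N := by
    have h6 : N = a ^ 4 + m * (-40 * a * m ^ 2) := by rw [hN]; ring
    rw [h6]
    exact (hcop_am.symm.pow_right (n := 4)).add_mul_left_right _
  have hmd2 : m ∣ (x2.den : ℤ) := by
    apply hcopmN.dvd_of_dvd_mul_left
    show m ∣ N * (x2.den : ℤ)
    rw [hD] at hcross
    have h1 : m ∣ x2.num * (4 * c ^ 2 * m) := ⟨x2.num * (4 * c ^ 2), by ring⟩
    rw [hcross] at h1
    exact h1
  have hle : m ≤ (x2.den : ℤ) := Int.le_of_dvd (by exact_mod_cast x2.pos) hmd2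
  have hne : m ≠ (x2.den : ℤ) := by
    intro hEq
    rw [hD] at hcross
    rw [← hEq] at hcross
    have h7 : N = x2.num * (4 * c ^ 2) := by
      have := mul_right_cancel₀ (by positivity : m ≠ (0:ℤ))
        (by linear_combination hcross : (x2.num * (4 * c ^ 2)) * m = N * m)
      linarith [this]
    have hNodd : Odd N := by
      rw [hN]
      exact (Int.not_even_iff_odd.mp (fun he => haodd he.two_dvd)).mul
        (by
          have hoa3 : Odd (a ^ 3) := (Int.not_even_iff_odd.mp (fun he => haodd he.two_dvd)).pow
          have hev : Even (40 * m ^ 3) := ⟨20 * m ^ 3, by ring⟩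
          exact hoa3.sub_even hev)
    have hNeven : Even N := ⟨x2.num * c ^ 2 * 2, by rw [h7]; ring⟩
    exact (Int.not_even_iff_odd.mpr hNodd) hNeven
  have hfinal := lt_of_le_of_ne hle hne
  rw [hmdef] at hfinal
  exact_mod_cast hfinal



open WeierstrassCurve.Affine

/-- The denominator of the x-coordinate of an affine point (0 for the point at infinity). -/
def pden {W : WeierstrassCurve.Affine ℚ} : W.Point → ℕ
  | .zero => 0
  | @WeierstrassCurve.Affine.Point.some _ _ _ x _ _ => x.den

/-- Let `B` be the elliptic curve over `ℚ` defined by `y² = x³ + 5`.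
Then `B` has no nontrivial torsion over `ℚ`: every point of finite order in `B(ℚ)` is the
identity (the point at infinity). -/
theorem stmt_13 (W : WeierstrassCurve ℚ) (hW : W = ⟨0, 0, 0, 0, 5⟩) :
    ∀ P : W.toAffine.Point, IsOfFinAddOrder P → P = 0 := by
  subst hW
  set C : WeierstrassCurve.Affine ℚ := (⟨0, 0, 0, 0, 5⟩ : WeierstrassCurve ℚ).toAffine with hC
  have ha1 : C.a₁ = 0 := rfl
  have ha2 : C.a₂ = 0 := rfl
  have ha3 : C.a₃ = 0 := rfl
  have ha4 : C.a₄ = 0 := rfl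
  have ha6 : C.a₆ = 5 := rfl
  have heqxy : ∀ x y : ℚ, C.Equation x y → y ^ 2 = x ^ 3 + 5 := by
    intro x y h
    rw [WeierstrassCurve.Affine.equation_iff, ha1, ha2, ha3, ha4, ha6] at h
    linarith
  have hy0 : ∀ x y : ℚ, C.Equation x y → y ≠ 0 := by
    intro x y h hy
    have h5 := heqxy x y h
    rw [hy] at h5
    exact rat_cube_ne_five (-x) (by linear_combination h5)
  have hnegY : ∀ x y : ℚ, C.negY x y = -y := by
    intro x y
    rw [WeierstrassCurve.Affine.negY, ha1, ha3]; ring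
  -- the key step
  have step : ∀ Q : C.Point, Q ≠ 0 → Q + Q ≠ 0 ∧ pden Q < pden (Q + Q) := by
    intro Q hQ
    cases Q with
    | zero => exact absurd rfl hQ
    | @some x y h =>
      have hy : y ≠ 0 := hy0 x y h.1
      have hYne : y ≠ C.negY x y := by
        rw [hnegY]
        intro hcon
        exact hy (by linarith [hcon])
      have hslope : C.slope x x y y = 3 * x ^ 2 / (2 * y) := by
        rw [WeierstrassCurve.Affine.slope_of_Y_ne rfl hYne, hnegY, ha1, ha2, ha4]
        congr 1 <;> ring
      have haddX : C.addX x x (C.slope x x y y) = (3 * x ^ 2 / (2 * y)) ^ 2 - 2 * x := by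
        rw [WeierstrassCurve.Affine.addX, hslope, ha1, ha2]; ring
      rw [WeierstrassCurve.Affine.Point.add_self_of_Y_ne hYne]
      refine ⟨WeierstrassCurve.Affine.Point.some_ne_zero _, ?_⟩
      show x.den < (C.addX x x (C.slope x x y y)).den
      rw [haddX]
      exact core x y (heqxy x y h.1) hy
  intro P hP
  by_contra hne
  set f : ℕ → C.Point := fun k => (fun Q => Q + Q)^[k] P with hf
  have hfsucc : ∀ k, f (k + 1) = f k + f k := by
    intro k
    simp only [hf, Function.iterate_succ_apply']
  have hf0 : ∀ k, f k ≠ 0 := by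
    intro k
    induction k with
    | zero => simp only [hf, Function.iterate_zero_apply]; exact hne
    | succ n ih => rw [hfsucc n]; exact (step _ ih).1
  have hmono : StrictMono fun k => pden (f k) :=
    strictMono_nat_of_lt_succ fun n => by
      rw [hfsucc n]; exact (step _ (hf0 n)).2
  have hinj : Function.Injective f := fun i j hij => hmono.injective (by rw [hij])
  have hmem : ∀ k, f k ∈ AddSubmonoid.multiples P := by
    intro k
    induction k with
    | zero => simp only [hf, Function.iterate_zero_apply]; exact AddSubmonoid.mem_multiples P
    | succ n ih => rw [hfsucc n]; exact AddSubmonoid.add_mem _ ih ih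
  exact absurd (Set.infinite_of_injective_forall_mem hinj hmem) hP.finite_multiples.not_infinite
end
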